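/- The Laguerre polynomials defined by L₀(x) = 1, L₁(x) = 1 − x, and (i+1) L_{i+1}(x) = (2i+1−x) L_i(x) − i L_{i−1}(x) are orthogonal with respect to the exponential density e^{−x} on (0,∞): for m ≠ n, ∫₀^∞ L_m(x) L_n(x) e^{−x} dx = 0. -/

import Mathlib

open Polynomial MeasureTheory

/-- The Laguerre polynomials: `L₀(x) = 1`, `L₁(x) = 1 − x`, and
`(i+1) L_{i+1}(x) = (2i+1−x) L_i(x) − i L_{i−1}(x)`. -/
noncomputable def laguerre : ℕ → Polynomial ℝ
  | 0 => 1
  | 1 => 1 - X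
  | (n + 2) =>
      C (((n : ℝ) + 2)⁻¹) *
        ((C (2 * (n : ℝ) + 3) - X) * laguerre (n + 1) - C ((n : ℝ) + 1) * laguerre n)

lemma integrableOn_pow_exp (k : ℕ) :
    IntegrableOn (fun x : ℝ => x ^ k * Real.exp (-x)) (Set.Ioi 0) := by
  have h := Real.GammaIntegral_convergent (s := (k : ℝ) + 1) (by positivity)
  refine h.congr_fun (fun x hx => ?_) measurableSet_Ioi
  simp only [show ((k:ℝ)+1) - 1 = (k:ℝ) by ring, Real.rpow_natCast]
  ring

lemma integral_pow_exp (k : ℕ) :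
    (∫ x in Set.Ioi (0:ℝ), x ^ k * Real.exp (-x)) = (Nat.factorial k : ℝ) := by
  rw [← Real.Gamma_nat_eq_factorial,
    Real.Gamma_eq_integral (by positivity : (0:ℝ) < (k:ℝ) + 1)]
  refine setIntegral_congr_fun measurableSet_Ioi fun x hx => ?_
  rw [show ((k:ℝ)+1) - 1 = (k:ℝ) by ring, Real.rpow_natCast]
  ring

lemma integrableOn_poly (p : Polynomial ℝ) :
    IntegrableOn (fun x : ℝ => p.eval x * Real.exp (-x)) (Set.Ioi 0) := by
  have h : (fun x : ℝ => p.eval x * Real.exp (-x)) =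
      fun x => ∑ k ∈ Finset.range (p.natDegree + 1), p.coeff k * x ^ k * Real.exp (-x) := by
    funext x
    rw [Polynomial.eval_eq_sum_range, Finset.sum_mul]
  rw [IntegrableOn, h]
  apply integrable_finset_sum
  intro k _
  simpa [mul_assoc] using ((integrableOn_pow_exp k).const_mul (p.coeff k))

noncomputable def Phi (p : Polynomial ℝ) : ℝ := ∫ x in Set.Ioi (0:ℝ), p.eval x * Real.exp (-x)

lemma Phi_sub (p q : Polynomial ℝ) : Phi (p - q) = Phi p - Phi q := by
  unfold Phi
  simp only [eval_sub, sub_mul]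
  exact integral_sub (integrableOn_poly p) (integrableOn_poly q)

lemma Phi_C_mul (a : ℝ) (p : Polynomial ℝ) : Phi (C a * p) = a * Phi p := by
  unfold Phi
  simp only [eval_mul, eval_C, mul_assoc]
  exact integral_const_mul _ _

lemma Phi_pow (k : ℕ) : Phi (X ^ k) = (Nat.factorial k : ℝ) := by
  simpa [Phi] using integral_pow_exp k

lemma Phi_sum {ι : Type*} (s : Finset ι) (f : ι → Polynomial ℝ) :
    Phi (∑ i ∈ s, f i) = ∑ i ∈ s, Phi (f i) := by
  unfold Phi
  simp only [eval_finset_sum, Finset.sum_mul]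
  exact integral_finset_sum s fun i _ => integrableOn_poly (f i)

lemma choose_key (j n : ℕ) :
    ((n:ℝ) + 1) * (j.choose (n+1)) = ((j:ℝ) - n) * j.choose n := by
  have h1 := Nat.add_one_mul_choose_eq j n
  have h2 : (j+1).choose (n+1) = j.choose n + j.choose (n+1) := Nat.choose_succ_succ j n
  rw [h2] at h1
  have h3 : ((j:ℝ)+1) * j.choose n = ((j.choose n : ℝ) + j.choose (n+1)) * ((n:ℝ)+1) := by
    exact_mod_cast congrArg (fun t : ℕ => (t:ℝ)) h1
  linear_combination -h3

lemma Phi_pow_laguerre : ∀ n j : ℕ, Phi (X ^ j * laguerre n) = (-1)^n * (Nat.factorial j : ℝ) * (j.choose n)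
  | 0, j => by simp [laguerre, Phi_pow]
  | 1, j => by
      have h : X ^ j * laguerre 1 = X ^ j - X ^ (j+1) := by
        show X ^ j * (1 - X) = _
        ring
      rw [h, Phi_sub, Phi_pow, Phi_pow]
      rw [Nat.factorial_succ]
      push_cast [Nat.choose_one_right]
      ring
  | (n+2), j => by
      have h1 := Phi_pow_laguerre (n+1) j
      have h1' := Phi_pow_laguerre (n+1) (j+1)
      have h0 := Phi_pow_laguerre n j
      have key : X ^ j * laguerre (n+2) =
          C (((n:ℝ)+2)⁻¹) * (C (2*(n:ℝ)+3) * (X ^ j * laguerre (n+1))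
            - X ^ (j+1) * laguerre (n+1) - C ((n:ℝ)+1) * (X ^ j * laguerre n)) := by
        show X ^ j * (C (((n : ℝ) + 2)⁻¹) *
          ((C (2 * (n : ℝ) + 3) - X) * laguerre (n + 1) - C ((n : ℝ) + 1) * laguerre n)) = _
        ring
      rw [key, Phi_C_mul, Phi_sub, Phi_sub, Phi_C_mul, Phi_C_mul, h1, h1', h0]
      have k1 := choose_key j n
      have k2 := choose_key j (n+1)
      norm_num at k2
      have pas : ((j+1).choose (n+1) : ℝ) = j.choose n + j.choose (n+1) := by
        exact_mod_cast congrArg (fun t : ℕ => (t:ℝ)) (Nat.choose_succ_succ j n)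
      have hfac : ((j+1).factorial : ℝ) = ((j:ℝ)+1) * j.factorial := by
        rw [Nat.factorial_succ]; push_cast; ring
      have hne : (n:ℝ) + 2 ≠ 0 := by positivity
      rw [hfac, pas, inv_mul_eq_iff_eq_mul₀ hne]
      push_cast at k1 k2 ⊢
      linear_combination (-((-1:ℝ)^n * (j.factorial : ℝ))) * k1 -
        ((-1:ℝ)^n * (j.factorial : ℝ)) * k2

lemma laguerre_natDegree_le : ∀ n : ℕ, (laguerre n).natDegree ≤ n
  | 0 => by simp [laguerre]
  | 1 => by
      show (1 - X : Polynomial ℝ).natDegree ≤ 1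
      calc (1 - X : Polynomial ℝ).natDegree ≤ max (1 : Polynomial ℝ).natDegree (X : Polynomial ℝ).natDegree :=
            natDegree_sub_le _ _
        _ ≤ 1 := by simp
  | (n+2) => by
      have h1 := laguerre_natDegree_le (n+1)
      have h0 := laguerre_natDegree_le n
      show (C (((n : ℝ) + 2)⁻¹) *
        ((C (2 * (n : ℝ) + 3) - X) * laguerre (n + 1) - C ((n : ℝ) + 1) * laguerre n)).natDegree ≤ n + 2
      calc (C (((n : ℝ) + 2)⁻¹) *
          ((C (2 * (n : ℝ) + 3) - X) * laguerre (n + 1) - C ((n : ℝ) + 1) * laguerre n)).natDegree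
          ≤ 0 + ((C (2 * (n : ℝ) + 3) - X) * laguerre (n + 1)
              - C ((n : ℝ) + 1) * laguerre n).natDegree := by
            refine le_trans (natDegree_mul_le) ?_
            gcongr
            simp
        _ ≤ max ((C (2 * (n : ℝ) + 3) - X) * laguerre (n + 1)).natDegree
              (C ((n : ℝ) + 1) * laguerre n).natDegree := by
            rw [zero_add]; exact natDegree_sub_le _ _
        _ ≤ n + 2 := by
            apply max_le
            · refine le_trans natDegree_mul_le ?_
              have : (C (2 * (n : ℝ) + 3) - X).natDegree ≤ 1 := by
                refine le_trans (natDegree_sub_le _ _) ?_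
                rw [natDegree_C, natDegree_X]; simp
              omega
            · refine le_trans natDegree_mul_le ?_
              simp only [natDegree_C, zero_add]
              omega

lemma orth_lt {m n : ℕ} (h : m < n) :
    ∫ x in Set.Ioi (0 : ℝ),
      (laguerre m).eval x * (laguerre n).eval x * Real.exp (-x) = 0 := by
  have heq : (∫ x in Set.Ioi (0 : ℝ),
      (laguerre m).eval x * (laguerre n).eval x * Real.exp (-x)) = Phi (laguerre m * laguerre n) := by
    simp [Phi]
  rw [heq]
  have hrep : laguerre m = ∑ k ∈ Finset.range (m+1), C ((laguerre m).coeff k) * X ^ k := by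
    conv_lhs => rw [(laguerre m).as_sum_range' (m+1) (Nat.lt_succ_of_le (laguerre_natDegree_le m))]
    exact Finset.sum_congr rfl fun k _ => by rw [← C_mul_X_pow_eq_monomial]
  rw [hrep, Finset.sum_mul, Phi_sum]
  refine Finset.sum_eq_zero fun k hk => ?_
  rw [mul_assoc, Phi_C_mul, Phi_pow_laguerre n k]
  have : k.choose n = 0 := Nat.choose_eq_zero_of_lt (lt_of_lt_of_le (Finset.mem_range.mp hk) h)
  simp [this]

/-- The Laguerre polynomials are orthogonal with respect to the exponential
density `e^{−x}` on `(0,∞)`: for `m ≠ n`,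
`∫₀^∞ L_m(x) L_n(x) e^{−x} dx = 0`. -/
theorem laguerre_orthogonal {m n : ℕ} (hmn : m ≠ n) :
    ∫ x in Set.Ioi (0 : ℝ),
      (laguerre m).eval x * (laguerre n).eval x * Real.exp (-x) = 0 := by
  rcases hmn.lt_or_gt with h | h
  · exact orth_lt h
  · rw [show (fun x => (laguerre m).eval x * (laguerre n).eval x * Real.exp (-x)) =
      fun x => (laguerre n).eval x * (laguerre m).eval x * Real.exp (-x) from funext fun x => by ring]
    exact orth_lt h
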